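/- Let n ≥ 2 be a natural number and let S = {27, 28, 29, 36, 37, 38, 42, 43, 44, 45, 46, 52, 53, 54, 62, 67, 68}. Then n can be written as a sum of pairwise distinct odd positive integers whose product is a perfect square if and only if n ∈ {9, 10}, or n ≥ 23 and n ∉ S. -/

import Mathlib

/-- A rational partition of `n`: a finite set of pairwise distinct odd positive
integers whose sum is `n` and whose product is a perfect square. -/
def HasRationalPartition (n : ℕ) : Prop :=
  ∃ A : Finset ℕ, (∀ a ∈ A, Odd a ∧ 0 < a) ∧ (∑ a ∈ A, a) = n ∧ IsSquare (∏ a ∈ A, a)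

/-! ### A kernel-reducible square test -/

/-- Binary search: decides whether some `r ∈ [lo, hi]` has `r * r = p`
(complete when `p` is a square with root in range and fuel suffices). -/
def bs : ℕ → ℕ → ℕ → ℕ → Bool
  | 0, lo, _, p => lo * lo == p
  | fuel+1, lo, hi, p =>
      if hi ≤ lo then lo * lo == p
      else
        let m := (lo + hi) / 2
        if m * m < p then bs fuel (m+1) hi p else bs fuel lo m p

/-- Square test, complete on squares. -/
def sqb (p : ℕ) : Bool := bs p 0 p p

lemma bs_complete : ∀ fuel lo hi r, lo ≤ r → r ≤ hi → hi - lo < 2 ^ fuel →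
    bs fuel lo hi (r * r) = true := by
  intro fuel
  induction fuel with
  | zero =>
    intro lo hi r h1 h2 h3
    simp only [pow_zero] at h3
    have : lo = r := by omega
    subst this
    simp [bs]
  | succ fuel ih =>
    intro lo hi r h1 h2 h3
    rw [bs]
    by_cases hle : hi ≤ lo
    · have : lo = r := by omega
      subst this
      simp [hle]
    · simp only [hle, if_false]
      set m := (lo + hi) / 2 with hm
      by_cases hlt : m * m < r * r
      · have hmr : m < r := by nlinarith
        simp only [hlt, if_true]
        exact ih (m+1) hi r (by omega) h2 (by rw [pow_succ] at h3; omega)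
      · have hrm : r ≤ m := by nlinarith
        simp only [hlt, if_false]
        exact ih lo m r h1 hrm (by rw [pow_succ] at h3; omega)

lemma sqb_complete {p : ℕ} (h : IsSquare p) : sqb p = true := by
  obtain ⟨r, rfl⟩ := h
  exact bs_complete _ 0 (r * r) r (Nat.zero_le _) (by nlinarith) Nat.lt_two_pow_self

/-! ### Exhaustive search for rational partitions with parts `≤ k` -/

def f : ℕ → ℕ → ℕ → Bool
  | 0, p, n => n == 0 && sqb p
  | k+1, p, n =>
      (n == 0 && sqb p) ||
      ((k+1) % 2 == 1 && k+1 ≤ n && f k (p*(k+1)) (n-(k+1))) ||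
      f k p n

lemma f_complete : ∀ (k p : ℕ) (A : Finset ℕ), (∀ a ∈ A, a % 2 = 1 ∧ 0 < a ∧ a ≤ k) →
    IsSquare (p * ∏ a ∈ A, a) → f k p (∑ a ∈ A, a) = true := by
  intro k
  induction k with
  | zero =>
    intro p A hA hsq
    have hempty : A = ∅ := by
      rcases Finset.eq_empty_or_nonempty A with h | ⟨a, ha⟩
      · exact h
      · exact absurd (hA a ha) (by omega)
    subst hempty
    simp only [Finset.prod_empty, mul_one] at hsq
    simp [f, sqb_complete hsq]
  | succ k ih =>
    intro p A hA hsq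
    by_cases hmem : k + 1 ∈ A
    · have hsum : ∑ a ∈ A, a = (k+1) + ∑ a ∈ A.erase (k+1), a :=
        (Finset.add_sum_erase A id hmem).symm
      have hprod : ∏ a ∈ A, a = (k+1) * ∏ a ∈ A.erase (k+1), a :=
        (Finset.mul_prod_erase A id hmem).symm
      have hih : f k (p * (k+1)) (∑ a ∈ A.erase (k+1), a) = true := by
        apply ih
        · intro a ha
          have h1 := hA a (Finset.mem_of_mem_erase ha)
          have h2 := Finset.ne_of_mem_erase ha
          omega
        · rw [mul_assoc]
          rw [hprod] at hsq
          exact hsq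
      rw [f, hsum]
      have hodd : (k+1) % 2 = 1 := (hA _ hmem).1
      simp only [Bool.or_eq_true, Bool.and_eq_true, beq_iff_eq, decide_eq_true_eq]
      refine Or.inl (Or.inr ⟨⟨hodd, by omega⟩, ?_⟩)
      have : k + 1 + ∑ a ∈ A.erase (k+1), a - (k+1) = ∑ a ∈ A.erase (k+1), a := by omega
      rw [this]
      exact hih
    · have hih : f k p (∑ a ∈ A, a) = true := by
        apply ih _ _ (fun a ha => ?_) hsq
        have h1 := hA a ha
        have : a ≠ k + 1 := fun h => hmem (h ▸ ha)
        omega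
      rw [f]
      simp only [Bool.or_eq_true]
      exact Or.inr hih

lemma hasPartition_f {n : ℕ} (h : HasRationalPartition n) : f n 1 n = true := by
  obtain ⟨A, h1, h2, h3⟩ := h
  have hb : ∀ a ∈ A, a % 2 = 1 ∧ 0 < a ∧ a ≤ n := by
    intro a ha
    obtain ⟨ho, hp⟩ := h1 a ha
    refine ⟨Nat.odd_iff.mp ho, hp, ?_⟩
    calc a = ∑ b ∈ {a}, b := by simp
    _ ≤ ∑ b ∈ A, b := Finset.sum_le_sum_of_subset (Finset.singleton_subset_iff.mpr ha)
    _ = n := h2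
  have := f_complete n 1 A hb (by rwa [one_mul])
  rwa [h2] at this

/-! ### Certificates for small good values -/

def Slist : List ℕ := [27, 28, 29, 36, 37, 38, 42, 43, 44, 45, 46, 52, 53, 54, 62, 67, 68]

def Good (n : ℕ) : Prop := n = 9 ∨ n = 10 ∨ (23 ≤ n ∧ n ∉ Slist)

instance : DecidablePred Good := fun _ => by unfold Good; infer_instance

set_option maxHeartbeats 1000000 in
set_option maxRecDepth 4000 in
def certList : List (Nat × List Nat × Nat) := [
  (9, [9], 3),
  (10, [1, 9], 3),
  (23, [3, 5, 15], 15),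
  (24, [1, 3, 5, 15], 15),
  (25, [25], 5),
  (26, [1, 25], 5),
  (30, [3, 27], 9),
  (31, [1, 3, 27], 9),
  (32, [1, 3, 7, 21], 21),
  (33, [1, 3, 5, 9, 15], 45),
  (34, [9, 25], 15),
  (35, [1, 9, 25], 15),
  (39, [3, 9, 27], 27),
  (40, [1, 3, 9, 27], 27),
  (41, [1, 3, 7, 9, 21], 63),
  (47, [3, 11, 33], 33),
  (48, [1, 3, 11, 33], 33),
  (49, [49], 7),
  (50, [1, 49], 7),
  (51, [1, 5, 45], 15),
  (55, [3, 13, 39], 39),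
  (56, [1, 3, 13, 39], 39),
  (57, [1, 3, 9, 11, 33], 99),
  (58, [9, 49], 21),
  (59, [1, 9, 49], 21),
  (60, [1, 5, 9, 45], 45),
  (61, [1, 3, 7, 15, 35], 105),
  (63, [3, 15, 45], 45),
  (64, [1, 3, 15, 45], 45),
  (65, [1, 3, 5, 21, 35], 105),
  (66, [1, 3, 7, 9, 21, 25], 315),
  (69, [3, 7, 9, 15, 35], 315),
  (70, [7, 63], 21),
  (71, [1, 7, 63], 21),
  (72, [1, 3, 17, 51], 51),
  (73, [1, 3, 5, 15, 49], 105),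
  (74, [25, 49], 35),
  (75, [1, 25, 49], 35),
  (76, [1, 5, 25, 45], 75),
  (77, [3, 5, 7, 27, 35], 315),
  (78, [1, 3, 5, 7, 27, 35], 315),
  (79, [3, 19, 57], 57),
  (80, [1, 3, 19, 57], 57),
  (81, [1, 3, 5, 27, 45], 135),
  (82, [1, 3, 5, 7, 21, 45], 315),
  (83, [5, 13, 65], 65),
  (84, [1, 5, 13, 65], 65),
  (85, [1, 3, 11, 15, 55], 165),
  (86, [1, 3, 7, 15, 25, 35], 525),
  (87, [3, 21, 63], 63),
  (88, [1, 3, 21, 63], 63),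
  (89, [1, 3, 9, 19, 57], 171),
  (90, [1, 3, 5, 9, 27, 45], 405),
  (91, [1, 3, 5, 7, 9, 21, 45], 945),
  (92, [5, 9, 13, 65], 195),
  (93, [1, 5, 9, 13, 65], 195),
  (94, [1, 3, 5, 7, 15, 63], 315),
  (95, [7, 25, 63], 105),
  (96, [1, 7, 25, 63], 105),
  (97, [1, 3, 5, 33, 55], 165),
  (98, [1, 3, 5, 11, 33, 45], 495),
  (99, [5, 45, 49], 105),
  (100, [1, 5, 45, 49], 105),
  (101, [1, 3, 7, 27, 63], 189),
  (102, [1, 3, 5, 11, 27, 55], 495),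
  (103, [5, 35, 63], 105),
  (104, [1, 5, 35, 63], 105),
  (105, [1, 3, 13, 39, 49], 273),
  (106, [1, 3, 5, 9, 33, 55], 495),
  (107, [1, 3, 5, 9, 11, 33, 45], 1485),
  (108, [5, 9, 45, 49], 315),
  (109, [1, 5, 9, 45, 49], 315),
  (110, [1, 3, 7, 9, 27, 63], 567),
  (111, [11, 45, 55], 165),
  (112, [1, 11, 45, 55], 165),
  (113, [1, 3, 5, 39, 65], 195),
  (114, [1, 3, 5, 13, 27, 65], 585),
  (115, [1, 3, 5, 7, 13, 21, 65], 1365),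
  (116, [3, 15, 35, 63], 315),
  (117, [1, 3, 15, 35, 63], 315),
  (118, [1, 3, 7, 11, 33, 63], 693),
  (119, [7, 49, 63], 147),
  (120, [1, 7, 49, 63], 147),
  (121, [1, 5, 7, 45, 63], 315),
  (122, [1, 3, 5, 9, 39, 65], 585),
  (123, [13, 45, 65], 195),
  (124, [1, 13, 45, 65], 195),
  (125, [1, 5, 25, 45, 49], 525),
  (126, [1, 3, 7, 13, 39, 63], 819),
  (127, [1, 3, 5, 7, 19, 35, 57], 1995),
  (128, [3, 19, 49, 57], 399),
  (129, [1, 3, 19, 49, 57], 399),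
  (130, [1, 3, 5, 19, 45, 57], 855),
  (131, [1, 3, 5, 11, 13, 33, 65], 2145),
  (132, [5, 13, 49, 65], 455),
  (133, [1, 5, 13, 49, 65], 455),
  (134, [1, 3, 5, 27, 35, 63], 945),
  (135, [1, 3, 5, 7, 21, 35, 63], 2205),
  (136, [3, 21, 49, 63], 441),
  (137, [1, 3, 21, 49, 63], 441),
  (138, [1, 3, 5, 21, 45, 63], 945),
  (139, [1, 3, 5, 9, 19, 45, 57], 2565),
  (140, [15, 27, 35, 63], 945),
  (141, [1, 15, 27, 35, 63], 945),
  (142, [1, 3, 7, 17, 51, 63], 1071),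
  (143, [35, 45, 63], 315),
  (144, [1, 35, 45, 63], 315),
  (145, [1, 11, 13, 55, 65], 715),
  (146, [1, 3, 5, 33, 49, 55], 1155),
  (147, [1, 3, 5, 9, 21, 45, 63], 2835),
  (148, [13, 25, 45, 65], 975),
  (149, [1, 13, 25, 45, 65], 975),
  (150, [1, 3, 7, 19, 57, 63], 1197),
  (151, [1, 3, 5, 7, 27, 45, 63], 2835),
  (152, [3, 39, 45, 65], 585),
  (153, [1, 3, 39, 45, 65], 585),
  (154, [1, 5, 7, 13, 63, 65], 1365),
  (155, [1, 3, 5, 13, 17, 51, 65], 3315),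
  (156, [1, 3, 5, 9, 13, 15, 45, 65], 8775),
  (157, [5, 13, 25, 49, 65], 2275),
  (158, [1, 5, 13, 25, 49, 65], 2275),
  (159, [1, 3, 5, 11, 21, 55, 63], 3465),
  (160, [11, 45, 49, 55], 1155),
  (161, [1, 11, 45, 49, 55], 1155),
  (162, [1, 3, 5, 39, 49, 65], 1365),
  (163, [1, 3, 5, 13, 19, 57, 65], 3705),
  (164, [11, 35, 55, 63], 1155),
  (165, [1, 11, 35, 55, 63], 1155),
  (166, [1, 3, 15, 35, 49, 63], 2205),
  (167, [1, 3, 5, 7, 33, 55, 63], 3465),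
  (168, [15, 39, 49, 65], 1365),
  (169, [1, 15, 39, 49, 65], 1365),
  (170, [1, 3, 13, 33, 55, 65], 2145),
  (171, [1, 3, 5, 9, 39, 49, 65], 4095),
  (172, [13, 45, 49, 65], 1365),
  (173, [1, 13, 45, 49, 65], 1365),
  (174, [1, 3, 11, 39, 55, 65], 2145),
  (175, [1, 3, 5, 17, 35, 51, 63], 5355),
  (176, [13, 35, 63, 65], 1365),
  (177, [1, 13, 35, 63, 65], 1365),
  (178, [1, 3, 25, 39, 45, 65], 2925),
  (179, [1, 3, 5, 19, 45, 49, 57], 5985),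
  (180, [1, 3, 5, 9, 13, 21, 63, 65], 12285),
  (181, [7, 11, 45, 55, 63], 3465),
  (182, [1, 7, 11, 45, 55, 63], 3465),
  (183, [1, 3, 5, 7, 39, 63, 65], 4095),
  (184, [1, 3, 5, 7, 13, 27, 63, 65], 12285),
  (185, [3, 33, 45, 49, 55], 3465),
  (186, [1, 3, 33, 45, 49, 55], 3465),
  (187, [1, 3, 5, 21, 45, 49, 63], 6615),
  (188, [1, 3, 5, 11, 15, 35, 55, 63], 17325),
  (189, [3, 33, 35, 55, 63], 3465),
  (190, [1, 3, 33, 35, 55, 63], 3465),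
  (191, [1, 3, 7, 17, 49, 51, 63], 7497),
  (192, [33, 39, 55, 65], 2145),
  (193, [1, 33, 39, 55, 65], 2145),
  (194, [1, 5, 21, 39, 63, 65], 4095),
  (195, [1, 3, 13, 17, 45, 51, 65], 9945),
  (196, [1, 3, 5, 9, 21, 45, 49, 63], 19845),
  (197, [11, 27, 39, 55, 65], 6435),
  (198, [1, 11, 27, 39, 55, 65], 6435),
  (199, [1, 3, 7, 19, 49, 57, 63], 8379),
  (200, [1, 3, 5, 7, 19, 45, 57, 63], 17955),
  (201, [3, 39, 45, 49, 65], 4095),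
  (202, [1, 3, 39, 45, 49, 65], 4095),
  (203, [1, 5, 7, 13, 49, 63, 65], 9555),
  (204, [1, 3, 5, 13, 17, 49, 51, 65], 23205),
  (205, [3, 35, 39, 63, 65], 4095),
  (206, [1, 3, 35, 39, 63, 65], 4095),
  (207, [1, 3, 7, 33, 45, 55, 63], 10395),
  (208, [1, 3, 5, 7, 25, 39, 63, 65], 20475),
  (209, [19, 21, 49, 57, 63], 8379),
  (210, [1, 19, 21, 49, 57, 63], 8379),
  (211, [1, 3, 9, 39, 45, 49, 65], 12285),
  (212, [1, 3, 5, 13, 19, 49, 57, 65], 25935),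
  (213, [11, 35, 49, 55, 63], 8085),
  (214, [1, 11, 35, 49, 55, 63], 8085),
  (215, [1, 3, 9, 35, 39, 63, 65], 12285),
  (216, [1, 3, 5, 7, 33, 49, 55, 63], 24255),
  (217, [17, 39, 45, 51, 65], 9945),
  (218, [1, 17, 39, 45, 51, 65], 9945),
  (219, [1, 3, 13, 33, 49, 55, 65], 15015),
  (220, [1, 3, 5, 13, 21, 49, 63, 65], 28665),
  (221, [1, 3, 5, 13, 15, 25, 45, 49, 65], 102375),
  (222, [3, 7, 39, 45, 63, 65], 12285),
  (223, [1, 3, 7, 39, 45, 63, 65], 12285),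
  (224, [1, 3, 5, 11, 39, 45, 55, 65], 32175),
  (225, [13, 35, 49, 63, 65], 9555),
  (226, [1, 13, 35, 49, 63, 65], 9555),
  (227, [1, 3, 25, 39, 45, 49, 65], 20475),
  (228, [1, 3, 9, 13, 33, 49, 55, 65], 45045),
  (229, [27, 35, 39, 63, 65], 12285),
  (230, [1, 27, 35, 39, 63, 65], 12285),
  (231, [1, 3, 25, 35, 39, 63, 65], 20475),
  (232, [1, 3, 5, 7, 39, 49, 63, 65], 28665),
  (233, [21, 39, 45, 63, 65], 12285),
  (234, [1, 21, 39, 45, 63, 65], 12285),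
  (235, [1, 5, 19, 39, 49, 57, 65], 25935),
  (236, [1, 3, 11, 17, 35, 51, 55, 63], 58905),
  (237, [1, 5, 7, 9, 13, 25, 49, 63, 65], 143325),
  (238, [3, 33, 35, 49, 55, 63], 24255),
  (239, [1, 3, 33, 35, 49, 55, 63], 24255),
  (240, [1, 3, 7, 13, 33, 55, 63, 65], 45045),
  (241, [33, 39, 49, 55, 65], 15015),
  (242, [1, 33, 39, 49, 55, 65], 15015),
  (243, [1, 5, 21, 39, 49, 63, 65], 28665),
  (244, [1, 3, 7, 11, 39, 55, 63, 65], 45045),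
  (245, [1, 3, 9, 11, 17, 35, 51, 55, 63], 176715),
  (246, [7, 27, 39, 45, 63, 65], 36855),
  (247, [1, 7, 27, 39, 45, 63, 65], 36855),
  (248, [1, 3, 7, 25, 39, 45, 63, 65], 61425),
  (249, [1, 3, 7, 9, 13, 33, 55, 63, 65], 135135),
  (250, [9, 33, 39, 49, 55, 65], 45045),
  (251, [1, 9, 33, 39, 49, 55, 65], 45045),
  (252, [1, 3, 13, 19, 45, 49, 57, 65], 77805),
  (253, [1, 3, 7, 9, 11, 39, 55, 63, 65], 135135),
  (254, [3, 35, 39, 49, 63, 65], 28665),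
  (255, [1, 3, 35, 39, 49, 63, 65], 28665),
  (256, [1, 3, 5, 35, 39, 45, 63, 65], 61425),
  (257, [1, 3, 7, 9, 25, 39, 45, 63, 65], 184275),
  (258, [21, 25, 39, 45, 63, 65], 61425),
  (259, [1, 21, 25, 39, 45, 63, 65], 61425),
  (260, [1, 3, 13, 21, 45, 49, 63, 65], 85995),
  (261, [1, 3, 9, 13, 19, 45, 49, 57, 65], 233415),
  (262, [7, 33, 39, 55, 63, 65], 45045),
  (263, [1, 7, 33, 39, 55, 63, 65], 45045),
  (264, [1, 3, 9, 35, 39, 49, 63, 65], 85995),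
  (265, [1, 3, 5, 9, 35, 39, 45, 63, 65], 184275),
  (266, [17, 39, 45, 49, 51, 65], 69615),
  (267, [1, 17, 39, 45, 49, 51, 65], 69615),
  (268, [1, 7, 11, 27, 39, 55, 63, 65], 135135),
  (269, [1, 3, 9, 13, 21, 45, 49, 63, 65], 257985),
  (270, [17, 35, 39, 51, 63, 65], 69615),
  (271, [1, 17, 35, 39, 51, 63, 65], 69615),
  (272, [1, 3, 7, 39, 45, 49, 63, 65], 85995),
  (273, [1, 7, 9, 11, 13, 49, 55, 63, 65], 315315),
  (274, [19, 39, 45, 49, 57, 65], 77805),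
  (275, [1, 19, 39, 45, 49, 57, 65], 77805),
  (276, [1, 5, 13, 35, 45, 49, 63, 65], 143325),
  (277, [1, 7, 9, 11, 27, 39, 55, 63, 65], 405405),
  (278, [19, 35, 39, 57, 63, 65], 77805),
  (279, [1, 19, 35, 39, 57, 63, 65], 77805),
  (280, [1, 3, 21, 33, 39, 55, 63, 65], 135135),
  (281, [1, 3, 7, 9, 39, 45, 49, 63, 65], 257985),
  (282, [21, 39, 45, 49, 63, 65], 85995),
  (283, [1, 21, 39, 45, 49, 63, 65], 85995),
  (284, [1, 11, 15, 35, 39, 55, 63, 65], 225225),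
  (285, [1, 5, 9, 13, 35, 45, 49, 63, 65], 429975),
  (286, [1, 3, 5, 7, 19, 27, 39, 57, 63, 65], 700245),
  (287, [7, 17, 39, 45, 51, 63, 65], 208845),
  (288, [1, 7, 17, 39, 45, 51, 63, 65], 208845),
  (289, [1, 3, 9, 21, 33, 39, 55, 63, 65], 405405),
  (290, [1, 3, 5, 15, 25, 33, 39, 49, 55, 65], 1126125),
  (291, [5, 33, 39, 45, 49, 55, 65], 225225),
  (292, [1, 5, 33, 39, 45, 49, 55, 65], 225225),
  (293, [1, 9, 11, 15, 35, 39, 55, 63, 65], 675675),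
  (294, [1, 3, 7, 11, 13, 27, 49, 55, 63, 65], 945945),
  (295, [5, 33, 35, 39, 55, 63, 65], 225225),
  (296, [1, 5, 33, 35, 39, 55, 63, 65], 225225),
  (297, [1, 7, 9, 17, 39, 45, 51, 63, 65], 626535),
  (298, [1, 3, 5, 21, 25, 27, 39, 49, 63, 65], 1289925),
  (299, [13, 21, 33, 49, 55, 63, 65], 315315),
  (300, [1, 13, 21, 33, 49, 55, 63, 65], 315315),
  (301, [1, 5, 9, 33, 39, 45, 49, 55, 65], 675675),
  (302, [1, 3, 7, 9, 27, 33, 39, 55, 63, 65], 1216215),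
  (303, [11, 21, 39, 49, 55, 63, 65], 315315),
  (304, [1, 11, 21, 39, 49, 55, 63, 65], 315315),
  (305, [1, 5, 9, 33, 35, 39, 55, 63, 65], 675675),
  (306, [1, 3, 5, 13, 27, 35, 45, 49, 63, 65], 1289925),
  (307, [21, 25, 39, 45, 49, 63, 65], 429975),
  (308, [1, 21, 25, 39, 45, 49, 63, 65], 429975),
  (309, [1, 9, 13, 21, 33, 49, 55, 63, 65], 945945),
  (310, [1, 3, 7, 19, 27, 33, 45, 55, 57, 63], 1777545),
  (311, [7, 33, 39, 49, 55, 63, 65], 315315),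
  (312, [1, 7, 33, 39, 49, 55, 63, 65], 315315),
  (313, [1, 9, 11, 21, 39, 49, 55, 63, 65], 945945),
  (314, [1, 3, 11, 15, 27, 35, 39, 55, 63, 65], 2027025),
  (315, [1, 3, 5, 15, 17, 25, 39, 45, 49, 51, 65], 5221125),
  (316, [9, 21, 25, 39, 45, 49, 63, 65], 1289925),
  (317, [1, 9, 21, 25, 39, 45, 49, 63, 65], 1289925),
  (318, [1, 3, 7, 17, 27, 39, 45, 51, 63, 65], 1879605),
  (319, [17, 35, 39, 49, 51, 63, 65], 487305),
  (320, [1, 17, 35, 39, 49, 51, 63, 65], 487305),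
  (321, [1, 7, 9, 33, 39, 49, 55, 63, 65], 945945),
  (322, [1, 3, 5, 27, 33, 39, 45, 49, 55, 65], 2027025),
  (323, [1, 3, 5, 15, 19, 25, 39, 45, 49, 57, 65], 5835375),
  (324, [13, 21, 25, 33, 49, 55, 63, 65], 1576575),
  (325, [1, 13, 21, 25, 33, 49, 55, 63, 65], 1576575),
  (326, [1, 3, 5, 27, 33, 35, 39, 55, 63, 65], 2027025),
  (327, [19, 35, 39, 49, 57, 63, 65], 544635),
  (328, [1, 19, 35, 39, 49, 57, 63, 65], 544635),
  (329, [1, 9, 17, 35, 39, 49, 51, 63, 65], 1461915),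
  (330, [1, 3, 13, 21, 27, 33, 49, 55, 63, 65], 2837835),
  (331, [1, 3, 5, 15, 21, 25, 39, 45, 49, 63, 65], 6449625),
  (332, [11, 15, 35, 39, 49, 55, 63, 65], 1576575),
  (333, [1, 11, 15, 35, 39, 49, 55, 63, 65], 1576575),
  (334, [1, 3, 11, 21, 27, 39, 49, 55, 63, 65], 2837835),
  (335, [33, 35, 39, 45, 55, 63, 65], 675675),
  (336, [1, 33, 35, 39, 45, 55, 63, 65], 675675),
  (337, [1, 9, 19, 35, 39, 49, 57, 63, 65], 1633905),
  (338, [1, 3, 21, 25, 27, 39, 45, 49, 63, 65], 3869775),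
  (339, [3, 5, 9, 15, 21, 25, 39, 45, 49, 63, 65], 19348875),
  (340, [1, 3, 5, 9, 15, 21, 25, 39, 45, 49, 63, 65], 19348875),
  (341, [5, 13, 19, 33, 45, 49, 55, 57, 65], 4279275),
  (342, [1, 3, 7, 27, 33, 39, 49, 55, 63, 65], 2837835),
  (343, [1, 3, 5, 15, 17, 35, 39, 49, 51, 63, 65], 7309575),
  (344, [9, 33, 35, 39, 45, 55, 63, 65], 2027025),
  (345, [1, 9, 33, 35, 39, 45, 55, 63, 65], 2027025),
  (346, [1, 5, 11, 19, 39, 45, 49, 55, 57, 65], 4279275),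
  (347, [1, 3, 9, 21, 25, 27, 39, 45, 49, 63, 65], 11609325),
  (348, [1, 3, 5, 13, 15, 21, 25, 33, 49, 55, 63, 65], 23648625),
  (349, [5, 13, 21, 33, 45, 49, 55, 63, 65], 4729725),
  (350, [1, 3, 17, 27, 35, 39, 49, 51, 63, 65], 4385745),
  (351, [1, 3, 5, 15, 19, 35, 39, 49, 57, 63, 65], 8169525),
  (352, [19, 25, 35, 39, 49, 57, 63, 65], 2723175),
  (353, [1, 19, 25, 35, 39, 49, 57, 63, 65], 2723175),
  (354, [1, 5, 11, 21, 39, 45, 49, 55, 63, 65], 4729725),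
  (355, [1, 3, 11, 21, 25, 33, 39, 45, 49, 63, 65], 14189175),
  (356, [1, 5, 9, 11, 15, 21, 33, 39, 45, 49, 63, 65], 42567525),
  (357, [3, 19, 27, 35, 39, 49, 57, 63, 65], 4901715),
  (358, [1, 3, 19, 27, 35, 39, 49, 57, 63, 65], 4901715),
  (359, [1, 3, 5, 15, 33, 35, 39, 45, 55, 63, 65], 10135125),
  (360, [25, 33, 35, 39, 45, 55, 63, 65], 3378375),
  (361, [1, 25, 33, 35, 39, 45, 55, 63, 65], 3378375),
  (362, [1, 5, 7, 33, 39, 45, 49, 55, 63, 65], 4729725),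
  (363, [3, 9, 11, 21, 25, 33, 39, 45, 49, 63, 65], 42567525),
  (364, [1, 5, 9, 15, 17, 25, 33, 39, 49, 51, 55, 65], 57432375),
  (365, [3, 27, 33, 35, 39, 45, 55, 63, 65], 6081075),
  (366, [1, 3, 27, 33, 35, 39, 45, 55, 63, 65], 6081075),
  (367, [1, 3, 7, 21, 33, 35, 39, 45, 55, 63, 65], 14189175),
  (368, [1, 3, 5, 15, 17, 25, 35, 39, 49, 51, 63, 65], 36547875),
  (369, [5, 17, 35, 39, 45, 49, 51, 63, 65], 7309575),
  (370, [1, 5, 17, 35, 39, 45, 49, 51, 63, 65], 7309575),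
  (371, [5, 11, 15, 21, 25, 33, 39, 45, 49, 63, 65], 70945875),
  (372, [1, 3, 5, 11, 17, 27, 35, 39, 51, 55, 63, 65], 34459425),
  (373, [1, 3, 7, 9, 11, 15, 21, 35, 39, 49, 55, 63, 65], 99324225),
  (374, [3, 11, 17, 21, 39, 49, 51, 55, 63, 65], 16081065),
  (375, [1, 3, 9, 27, 33, 35, 39, 45, 55, 63, 65], 18243225),
  (376, [1, 3, 5, 15, 19, 25, 35, 39, 49, 57, 63, 65], 40847625),
  (377, [5, 19, 35, 39, 45, 49, 57, 63, 65], 8169525),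
  (378, [1, 5, 19, 35, 39, 45, 49, 57, 63, 65], 8169525),
  (379, [1, 3, 17, 21, 25, 39, 45, 49, 51, 63, 65], 21928725),
  (380, [5, 9, 11, 15, 21, 25, 33, 39, 45, 49, 63, 65], 212837625),
  (381, [1, 5, 9, 11, 15, 21, 25, 33, 39, 45, 49, 63, 65], 212837625),
  (382, [3, 7, 17, 33, 39, 49, 51, 55, 63, 65], 16081065),
  (383, [1, 5, 15, 27, 33, 35, 39, 45, 55, 63, 65], 30405375),
  (384, [33, 35, 39, 45, 49, 55, 63, 65], 4729725),
  (385, [1, 33, 35, 39, 45, 49, 55, 63, 65], 4729725),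
  (386, [5, 9, 19, 35, 39, 45, 49, 57, 63, 65], 24508575),
  (387, [1, 3, 19, 21, 25, 39, 45, 49, 57, 63, 65], 24508575),
  (388, [1, 3, 9, 17, 21, 25, 39, 45, 49, 51, 63, 65], 65786175),
  (389, [1, 3, 7, 15, 17, 21, 27, 35, 39, 45, 51, 63, 65], 197358525),
  (390, [5, 11, 17, 35, 39, 49, 51, 55, 63, 65], 26801775),
  (391, [1, 3, 25, 27, 33, 35, 39, 45, 55, 63, 65], 30405375),
  (392, [1, 3, 9, 15, 17, 35, 39, 45, 49, 51, 63, 65], 65786175),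
  (393, [9, 33, 35, 39, 45, 49, 55, 63, 65], 14189175),
  (394, [1, 9, 33, 35, 39, 45, 49, 55, 63, 65], 14189175),
  (395, [3, 9, 19, 21, 25, 39, 45, 49, 57, 63, 65], 73525725),
  (396, [1, 3, 5, 19, 25, 33, 39, 45, 49, 55, 57, 65], 64189125),
  (397, [1, 3, 5, 15, 17, 19, 27, 35, 39, 51, 57, 63, 65], 178562475),
  (398, [3, 17, 19, 35, 39, 49, 51, 57, 63, 65], 27776385),
  (399, [3, 9, 25, 27, 33, 35, 39, 45, 55, 63, 65], 91216125),
  (400, [1, 3, 9, 15, 19, 35, 39, 45, 49, 57, 63, 65], 73525725)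
]

def certs (n : Nat) : List Nat × Nat := ((certList.find? (fun e => e.1 == n)).map Prod.snd).getD ([], 0)

def checkOne (n : ℕ) : Bool :=
  let (l, r) := certs n
  l.Nodup && l.all (fun a => a % 2 == 1 && a ≤ 67) && (l.sum == n) && (l.prod == r * r)

set_option maxHeartbeats 4000000 in
set_option maxRecDepth 100000 in
lemma base_check : ∀ n, n < 401 → Good n → checkOne n = true := by decide

lemma check_to_part {n : ℕ} (h : checkOne n = true) :
    ∃ A : Finset ℕ, (∀ a ∈ A, Odd a ∧ 0 < a) ∧ (∑ a ∈ A, a) = n ∧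
      IsSquare (∏ a ∈ A, a) ∧ ∀ a ∈ A, a ≤ 67 := by
  simp only [checkOne, Bool.and_eq_true, List.all_eq_true, beq_iff_eq,
    decide_eq_true_eq] at h
  obtain ⟨⟨⟨hnd, hodd⟩, hsum⟩, hprod⟩ := h
  refine ⟨(certs n).1.toFinset, ?_, ?_, ?_, ?_⟩
  · intro a ha
    rw [List.mem_toFinset] at ha
    have := hodd a ha
    exact ⟨Nat.odd_iff.mpr this.1, by omega⟩
  · rw [List.sum_toFinset _ hnd]
    simpa using hsum
  · rw [List.prod_toFinset _ hnd]
    simp only [List.map_id']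
    exact ⟨(certs n).2, hprod⟩
  · intro a ha
    rw [List.mem_toFinset] at ha
    exact (hodd a ha).2

lemma good_part : ∀ n, Good n → ∃ A : Finset ℕ, (∀ a ∈ A, Odd a ∧ 0 < a) ∧
    (∑ a ∈ A, a) = n ∧ IsSquare (∏ a ∈ A, a) ∧
    ∀ a ∈ A, a ≤ 67 ∨ (IsSquare a ∧ a + 100 ≤ n) := by
  intro n
  induction n using Nat.strong_induction_on with
  | _ n ih =>
  intro hg
  by_cases h400 : n < 401
  · obtain ⟨A, h1, h2, h3, h4⟩ := check_to_part (base_check n h400 hg)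
    exact ⟨A, h1, h2, h3, fun a ha => Or.inl (h4 a ha)⟩
  · push_neg at h400
    have hx : 301 ≤ n - 100 := by omega
    set x := n - 100 with hxdef
    set k := Nat.sqrt x with hk
    have hk17 : 17 ≤ k := Nat.le_sqrt.mpr (by omega)
    set t := (if k % 2 = 1 then k else k - 1) with ht
    have htodd : t % 2 = 1 := by rw [ht]; split <;> omega
    have htk1 : k - 1 ≤ t := by rw [ht]; split <;> omega
    have htk2 : t ≤ k := by rw [ht]; split <;> omega
    have hkk : k * k ≤ x := by simpa [pow_two] using Nat.sqrt_le' x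
    have hxk : x < (k+1) * (k+1) := by
      simpa [pow_two, Nat.succ_eq_add_one] using Nat.lt_succ_sqrt' x
    have hsle : t * t ≤ x := le_trans (Nat.mul_le_mul htk2 htk2) hkk
    have ht16 : 16 ≤ t := by omega
    have hk1t : k + 1 ≤ t + 2 := by omega
    have hxt : x < (t+2) * (t+2) := lt_of_lt_of_le hxk (Nat.mul_le_mul hk1t hk1t)
    have hx2s : x < 2 * (t * t) := by nlinarith
    have hs67 : 256 ≤ t * t := Nat.mul_le_mul ht16 ht16
    set s := t * t with hs
    have hmgood : Good (n - s) := by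
      right; right
      refine ⟨by omega, fun hmem => ?_⟩
      have : n - s = 27 ∨ n - s = 28 ∨ n - s = 29 ∨ n - s = 36 ∨ n - s = 37 ∨
          n - s = 38 ∨ n - s = 42 ∨ n - s = 43 ∨ n - s = 44 ∨ n - s = 45 ∨
          n - s = 46 ∨ n - s = 52 ∨ n - s = 53 ∨ n - s = 54 ∨ n - s = 62 ∨
          n - s = 67 ∨ n - s = 68 := by simpa [Slist] using hmem
      omega
    obtain ⟨A, h1, h2, h3, h4⟩ := ih (n - s) (by omega) hmgood
    have hsA : s ∉ A := by
      intro hmem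
      rcases h4 s hmem with h | h
      · omega
      · omega
    refine ⟨insert s A, ?_, ?_, ?_, ?_⟩
    · intro a ha
      rcases Finset.mem_insert.mp ha with rfl | ha
      · refine ⟨Nat.odd_iff.mpr ?_, by omega⟩
        rw [hs, Nat.mul_mod, htodd]
      · exact h1 a ha
    · rw [Finset.sum_insert hsA, h2]; omega
    · rw [Finset.prod_insert hsA]
      exact IsSquare.mul ⟨t, rfl⟩ h3
    · intro a ha
      rcases Finset.mem_insert.mp ha with rfl | ha
      · exact Or.inr ⟨⟨t, rfl⟩, by omega⟩
      · rcases h4 a ha with h | h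
        · exact Or.inl h
        · exact Or.inr ⟨h.1, by omega⟩

set_option maxHeartbeats 4000000 in
theorem hasRationalPartition_iff (n : ℕ) (hn : 2 ≤ n) :
    HasRationalPartition n ↔
      n ∈ ({9, 10} : Finset ℕ) ∨
        (23 ≤ n ∧ n ∉ ({27, 28, 29, 36, 37, 38, 42, 43, 44, 45, 46, 52, 53, 54, 62, 67,
          68} : Finset ℕ)) := by
  constructor
  · intro h
    have hf := hasPartition_f h
    by_contra hbad
    push_neg at hbad
    obtain ⟨h910, hS⟩ := hbad
    simp only [Finset.mem_insert, Finset.mem_singleton] at h910 hS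
    have h68 : n ≤ 68 := by
      by_cases h23 : 23 ≤ n
      · have := hS h23; omega
      · omega
    interval_cases n <;> first | omega | exact absurd hf (by decide)
  · intro h
    have hg : Good n := by
      simp only [Finset.mem_insert, Finset.mem_singleton] at h
      unfold Good Slist
      rcases h with h | ⟨h1, h2⟩
      · rcases h with h | h
        · exact Or.inl h
        · exact Or.inr (Or.inl h)
      · refine Or.inr (Or.inr ⟨h1, fun hmem => h2 ?_⟩)
        have h' : n = 27 ∨ n = 28 ∨ n = 29 ∨ n = 36 ∨ n = 37 ∨ n = 38 ∨ n = 42 ∨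
            n = 43 ∨ n = 44 ∨ n = 45 ∨ n = 46 ∨ n = 52 ∨ n = 53 ∨ n = 54 ∨
            n = 62 ∨ n = 67 ∨ n = 68 := by simpa [Slist] using hmem
        tauto
    obtain ⟨A, h1, h2, h3, _⟩ := good_part n hg
    exact ⟨A, h1, h2, h3⟩
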